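/- Let μ_1,…,μ_m be nonzero complex numbers with |μ_i| ≠ 1 for every i and |μ_i| > 1 for at least one i. For each positive integer n let a_{1,n},…,a_{m,n} be defined by ∏_{j=1}^m (z − μ_j^n) = z^m + a_{1,n} z^{m−1} + ⋯ + a_{m,n}, let F̄_n be the m×m nonnegative matrix with first column (|a_{1,n}|,…,|a_{m,n}|)ᵀ, superdiagonal entries 1 and all other entries 0, and for r ∈ ℝ let D(r) = diag(2^{−nr}, 1, …, 1). Define R^f_n = inf{ r ∈ ℝ : λ(F̄_n D(r)) < 1 }. Then lim_{n→∞} R^f_n = Σ_{i : |μ_i| > 1} log₂ |μ_i|. -/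

import Mathlib

open Matrix

/-- `acoef m μ n i` is the coefficient `a_{i,n}` (for `1 ≤ i ≤ m`) defined by
`∏_{j=1}^m (z − μ_j^n) = z^m + a_{1,n} z^{m-1} + ⋯ + a_{m,n}`;
i.e. the coefficient of `z^{m-i}` in the monic polynomial with roots `μ_1^n, …, μ_m^n`. -/
noncomputable def acoef (m : ℕ) (μ : Fin m → ℂ) (n i : ℕ) : ℂ :=
  (∏ j : Fin m, (Polynomial.X - Polynomial.C (μ j ^ n))).coeff (m - i)

/-- The nonnegative matrix `F̄_n`: first column `(|a_{1,n}|, …, |a_{m,n}|)ᵀ`,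
ones on the superdiagonal, zeros elsewhere. -/
noncomputable def absCompanion (m : ℕ) (μ : Fin m → ℂ) (n : ℕ) :
    Matrix (Fin m) (Fin m) ℝ :=
  Matrix.of fun i j =>
    (if (j : ℕ) = 0 then ‖acoef m μ n ((i : ℕ) + 1)‖ else 0)
      + (if (j : ℕ) = (i : ℕ) + 1 then 1 else 0)

/-- The diagonal matrix `D(r) = diag(2^{-nr}, 1, …, 1)`. -/
noncomputable def rateDiag (m n : ℕ) (r : ℝ) : Matrix (Fin m) (Fin m) ℝ :=
  Matrix.diagonal fun i => if (i : ℕ) = 0 then (2 : ℝ) ^ (-((n : ℝ) * r)) else 1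

/-- The spectral radius of a real square matrix: the maximum modulus of its complex
eigenvalues, formalized as the spectral radius (over `ℂ`) of its complexification. -/
noncomputable def specRad {m : ℕ} (A : Matrix (Fin m) (Fin m) ℝ) : ENNReal :=
  spectralRadius ℂ (A.map (Complex.ofReal ·))



noncomputable def compMat {m : ℕ} (b : Fin m → ℝ) : Matrix (Fin m) (Fin m) ℝ :=
  Matrix.of fun i j =>
    (if (j : ℕ) = 0 then b i else 0) + (if (j : ℕ) = (i : ℕ) + 1 then 1 else 0)


lemma mat_spectrum_iff {m : ℕ} (A : Matrix (Fin m) (Fin m) ℂ) (z : ℂ) :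
    z ∈ spectrum ℂ A ↔ ∃ v : Fin m → ℂ, v ≠ 0 ∧ A *ᵥ v = z • v := by
  have key : ∀ v : Fin m → ℂ,
      (algebraMap ℂ (Matrix (Fin m) (Fin m) ℂ) z - A) *ᵥ v = z • v - A *ᵥ v := by
    intro v
    rw [Matrix.sub_mulVec, Algebra.algebraMap_eq_smul_one, Matrix.smul_mulVec,
      Matrix.one_mulVec]
  rw [spectrum.mem_iff, Matrix.isUnit_iff_isUnit_det, isUnit_iff_ne_zero, not_not,
    ← Matrix.exists_mulVec_eq_zero_iff]
  constructor
  · rintro ⟨v, hv, h⟩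
    exact ⟨v, hv, by rw [key] at h; rw [← sub_eq_zero]; rw [sub_eq_zero] at h ⊢; exact h.symm⟩
  · rintro ⟨v, hv, h⟩
    exact ⟨v, hv, by rw [key, h, sub_self]⟩

lemma compMat_map_mulVec {m : ℕ} (hm : 0 < m) (b : Fin m → ℝ) (v : Fin m → ℂ) (i : Fin m) :
    (((compMat b).map (Complex.ofReal ·)) *ᵥ v) i
      = (b i : ℂ) * v ⟨0, hm⟩ + (if h : (i : ℕ) + 1 < m then v ⟨(i : ℕ) + 1, h⟩ else 0) := by
  haveI : NeZero m := ⟨hm.ne'⟩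
  have e0 : ∀ j : Fin m, ((j : ℕ) = 0) = (j = ⟨0, hm⟩) := by
    intro j; rw [eq_iff_iff, Fin.ext_iff]
  simp only [Matrix.mulVec, dotProduct, compMat, Matrix.map_apply, Matrix.of_apply,
    Complex.ofReal_add, apply_ite Complex.ofReal, Complex.ofReal_zero, Complex.ofReal_one,
    add_mul, ite_mul, zero_mul, one_mul, Finset.sum_add_distrib, e0]
  rw [Finset.sum_ite_eq' Finset.univ (⟨0, hm⟩ : Fin m) (fun j => (b i : ℂ) * v j)]
  simp only [Finset.mem_univ, if_true]
  congr 1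
  split
  · next h =>
    have e1 : ∀ j : Fin m, ((j : ℕ) = (i : ℕ) + 1) = (j = ⟨(i : ℕ) + 1, h⟩) := by
      intro j; rw [eq_iff_iff, Fin.ext_iff]
    simp only [e1]
    rw [Finset.sum_ite_eq' Finset.univ (⟨(i : ℕ) + 1, h⟩ : Fin m) v]
    simp
  · next h =>
    apply Finset.sum_eq_zero
    intro j _
    have : (j : ℕ) ≠ (i : ℕ) + 1 := by have := j.isLt; omega
    simp [this]

/-- extension of `b` to `ℕ` -/
noncomputable def bR {m : ℕ} (b : Fin m → ℝ) (k : ℕ) : ℝ :=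
  if h : k < m then b ⟨k, h⟩ else 0

lemma bR_nonneg {m : ℕ} {b : Fin m → ℝ} (hb : ∀ i, 0 ≤ b i) (k : ℕ) : 0 ≤ bR b k := by
  unfold bR; split
  · exact hb _
  · exact le_rfl

lemma bR_sum {m : ℕ} (b : Fin m → ℝ) : ∑ k ∈ Finset.range m, bR b k = ∑ i, b i := by
  rw [← Fin.sum_univ_eq_sum_range (fun k => bR b k) m]
  exact Finset.sum_congr rfl fun i _ => by simp [bR, i.isLt]

lemma spec_poly {m : ℕ} (hm : 0 < m) (b : Fin m → ℝ) {z : ℂ}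
    (hzs : z ∈ spectrum ℂ ((compMat b).map (Complex.ofReal ·))) :
    z ^ m = ∑ i ∈ Finset.range m, (bR b i : ℂ) * z ^ (m - 1 - i) := by
  obtain ⟨v, hv, heq⟩ := (mat_spectrum_iff _ _).mp hzs
  set v' : ℕ → ℂ := fun k => if h : k < m then v ⟨k, h⟩ else 0 with hv'
  have hrow : ∀ k < m, (bR b k : ℂ) * v' 0 + v' (k + 1) = z * v' k := by
    intro k hk
    have h1 := congrFun heq ⟨k, hk⟩
    rw [compMat_map_mulVec hm] at h1
    simp only [Pi.smul_apply, smul_eq_mul] at h1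
    simpa [hv', bR, hk, hm] using h1
  have hv0 : v' 0 ≠ 0 := by
    intro h0
    apply hv
    have hall : ∀ k, k < m → v' k = 0 := by
      intro k
      induction k with
      | zero => intro _; exact h0
      | succ k ih =>
        intro hk
        have hk' : k < m := by omega
        have := hrow k hk'
        rw [ih hk', h0, mul_zero, mul_zero, zero_add] at this
        exact this
    funext j
    have := hall j j.isLt
    simpa [hv'] using this
  have tele := Finset.sum_range_sub' (fun i => z ^ (m - i) * v' i) m
  have hterm : ∀ i ∈ Finset.range m,
      z ^ (m - i) * v' i - z ^ (m - (i + 1)) * v' (i + 1)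
        = (bR b i : ℂ) * z ^ (m - 1 - i) * v' 0 := by
    intro i hi
    rw [Finset.mem_range] at hi
    have e1 : m - (i + 1) = m - 1 - i := by omega
    have e2 : z ^ (m - i) = z ^ (m - 1 - i) * z := by
      rw [← pow_succ]; congr 1; omega
    have := hrow i hi
    have hvv : v' (i + 1) = z * v' i - (bR b i : ℂ) * v' 0 := by
      rw [← this]; ring
    rw [e1, e2, hvv]; ring
  rw [Finset.sum_congr rfl hterm] at tele
  have hvm : v' m = 0 := by simp [hv']
  rw [hvm] at tele
  have : (∑ i ∈ Finset.range m, (bR b i : ℂ) * z ^ (m - 1 - i)) * v' 0 = z ^ m * v' 0 := by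
    rw [Finset.sum_mul]
    rw [tele]; simp
  exact (mul_right_cancel₀ hv0 this).symm

lemma specRad_compMat_lt_one_iff {m : ℕ} (hm : 0 < m) (b : Fin m → ℝ) (hb : ∀ i, 0 ≤ b i) :
    specRad (compMat b) < 1 ↔ ∑ i, b i < 1 := by
  set s := ∑ i, b i with hs
  have hs0 : 0 ≤ s := Finset.sum_nonneg fun i _ => hb i
  constructor
  · -- specRad < 1 → s < 1 : contrapositive
    intro hrad
    by_contra hs1
    push_neg at hs1  -- 1 ≤ s
    -- IVT root x₀ ≥ 1
    set f : ℝ → ℝ := fun x => x ^ m - ∑ j ∈ Finset.range m, bR b j * x ^ (m - 1 - j) with hf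
    have hcont : Continuous f :=
      (continuous_pow m).sub
        (continuous_finset_sum _ fun j _ => continuous_const.mul (continuous_pow _))
    have hf1 : f 1 ≤ 0 := by
      simp only [hf, one_pow, mul_one]
      rw [bR_sum]
      linarith
    have hf2 : (0 : ℝ) ≤ f (s + 1) := by
      have h1 : ∑ j ∈ Finset.range m, bR b j * (s + 1) ^ (m - 1 - j)
          ≤ ∑ j ∈ Finset.range m, bR b j * (s + 1) ^ (m - 1) := by
        refine Finset.sum_le_sum fun j _ => ?_
        refine mul_le_mul_of_nonneg_left ?_ (bR_nonneg hb j)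
        exact pow_le_pow_right₀ (by linarith) (by omega)
      rw [← Finset.sum_mul, bR_sum] at h1
      have h2 : (s + 1) ^ m = (s + 1) ^ (m - 1) * (s + 1) := by
        rw [← pow_succ]; congr 1; omega
      have h3 : (0 : ℝ) < (s + 1) ^ (m - 1) := by positivity
      simp only [hf]
      nlinarith
    obtain ⟨x₀, hx₀mem, hfx₀⟩ :=
      intermediate_value_Icc (by linarith : (1 : ℝ) ≤ s + 1) hcont.continuousOn ⟨hf1, hf2⟩
    have hx₀1 : 1 ≤ x₀ := hx₀mem.1
    -- eigenvector
    set u : ℕ → ℝ := fun k => Nat.rec (1 : ℝ) (fun k uk => x₀ * uk - bR b k) k with hu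
    have hu0 : u 0 = 1 := rfl
    have hurec : ∀ k, u (k + 1) = x₀ * u k - bR b k := fun k => rfl
    have hclosed : ∀ k, u k = x₀ ^ k - ∑ j ∈ Finset.range k, bR b j * x₀ ^ (k - 1 - j) := by
      intro k
      induction k with
      | zero => simp [hu0]
      | succ k ih =>
        rw [hurec, ih, Finset.sum_range_succ]
        have e1 : ∀ j ∈ Finset.range k, bR b j * x₀ ^ (k + 1 - 1 - j)
            = x₀ * (bR b j * x₀ ^ (k - 1 - j)) := by
          intro j hj
          rw [Finset.mem_range] at hj
          have : x₀ ^ (k - j) = x₀ * x₀ ^ (k - 1 - j) := by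
            rw [← pow_succ']; congr 1; omega
          have e2 : k + 1 - 1 - j = k - j := by omega
          rw [e2, this]; ring
        rw [Finset.sum_congr rfl e1, ← Finset.mul_sum]
        have e3 : k + 1 - 1 - k = 0 := by omega
        rw [e3, pow_zero, mul_one]
        ring
    have hum : u m = 0 := by
      rw [hclosed m]
      simpa [hf] using hfx₀
    set v : Fin m → ℂ := fun i => ((u i : ℝ) : ℂ) with hv
    have hvne : v ≠ 0 := by
      intro h
      have := congrFun h ⟨0, hm⟩
      simp [hv, hu0] at this
    have heig : ((compMat b).map (Complex.ofReal ·)) *ᵥ v = ((x₀ : ℂ)) • v := by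
      funext i
      rw [compMat_map_mulVec hm]
      simp only [Pi.smul_apply, smul_eq_mul, hv]
      split
      · next h =>
        have hreal : b i * u 0 + u ((i : ℕ) + 1) = x₀ * u (i : ℕ) := by
          have hbb : bR b (i : ℕ) = b i := by simp [bR, i.isLt]
          rw [hurec, hbb, hu0]; ring
        show ((b i : ℝ) : ℂ) * ((u 0 : ℝ) : ℂ) + ((u ((i : ℕ) + 1) : ℝ) : ℂ)
          = ((x₀ : ℝ) : ℂ) * ((u (i : ℕ) : ℝ) : ℂ)
        exact_mod_cast congrArg (fun t : ℝ => (t : ℂ)) hreal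
      · next h =>
        have him : (i : ℕ) + 1 = m := by have := i.isLt; omega
        have hreal : b i * u 0 + 0 = x₀ * u (i : ℕ) := by
          have h1 : u ((i : ℕ) + 1) = 0 := by rw [him]; exact hum
          rw [hurec] at h1
          have : bR b (i : ℕ) = b i := by simp [bR, i.isLt]
          rw [this] at h1
          rw [hu0]
          linarith
        show ((b i : ℝ) : ℂ) * ((u 0 : ℝ) : ℂ) + 0
          = ((x₀ : ℝ) : ℂ) * ((u (i : ℕ) : ℝ) : ℂ)
        rw [← Complex.ofReal_zero]
        exact_mod_cast congrArg (fun t : ℝ => (t : ℂ)) hreal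
    have hmem : ((x₀ : ℂ)) ∈ spectrum ℂ ((compMat b).map (Complex.ofReal ·)) :=
      (mat_spectrum_iff _ _).mpr ⟨v, hvne, heig⟩
    have hge : (1 : ENNReal) ≤ specRad (compMat b) := by
      refine le_trans ?_
        (le_iSup₂ (f := fun k (_ : k ∈ spectrum ℂ ((compMat b).map (Complex.ofReal ·)))
          => (‖k‖₊ : ENNReal)) _ hmem)
      rw [ENNReal.one_le_coe_iff, ← NNReal.coe_le_coe, coe_nnnorm]
      simpa using hx₀1.trans (le_abs_self x₀)
    exact absurd hrad (not_lt.mpr hge)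
  · -- s < 1 → specRad < 1
    intro hs1
    set c : ℝ := s ^ ((m : ℝ)⁻¹) with hc
    have hc0 : 0 ≤ c := Real.rpow_nonneg hs0 _
    have hc1 : c < 1 := Real.rpow_lt_one hs0 hs1 (by positivity)
    have hbound : ∀ z ∈ spectrum ℂ ((compMat b).map (Complex.ofReal ·)), ‖z‖ ≤ c := by
      intro z hzs
      have key := spec_poly hm b hzs
      have habs : ‖z‖ ^ m ≤ ∑ i ∈ Finset.range m, bR b i * ‖z‖ ^ (m - 1 - i) := by
        calc ‖z‖ ^ m = ‖z ^ m‖ := (norm_pow z m).symm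
          _ = ‖∑ i ∈ Finset.range m, (bR b i : ℂ) * z ^ (m - 1 - i)‖ := by rw [key]
          _ ≤ ∑ i ∈ Finset.range m, ‖(bR b i : ℂ) * z ^ (m - 1 - i)‖ := norm_sum_le _ _
          _ = ∑ i ∈ Finset.range m, bR b i * ‖z‖ ^ (m - 1 - i) := by
              refine Finset.sum_congr rfl fun i _ => ?_
              rw [norm_mul, norm_pow, Complex.norm_real, Real.norm_eq_abs,
                abs_of_nonneg (bR_nonneg hb i)]
      have hle1 : ‖z‖ ≤ 1 := by
        by_contra hgt
        push_neg at hgt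
        have h2 : ∑ i ∈ Finset.range m, bR b i * ‖z‖ ^ (m - 1 - i)
            ≤ ∑ i ∈ Finset.range m, bR b i * ‖z‖ ^ (m - 1) := by
          refine Finset.sum_le_sum fun i _ => ?_
          exact mul_le_mul_of_nonneg_left (pow_le_pow_right₀ hgt.le (by omega)) (bR_nonneg hb i)
        rw [← Finset.sum_mul, bR_sum] at h2
        have hpow : ‖z‖ ^ m = ‖z‖ ^ (m - 1) * ‖z‖ := by
          rw [← pow_succ]; congr 1; omega
        have h3 : (0 : ℝ) < ‖z‖ ^ (m - 1) := by positivity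
        nlinarith
      have hzm : ‖z‖ ^ m ≤ s := by
        refine habs.trans ?_
        calc ∑ i ∈ Finset.range m, bR b i * ‖z‖ ^ (m - 1 - i)
            ≤ ∑ i ∈ Finset.range m, bR b i * 1 := by
              refine Finset.sum_le_sum fun i _ => ?_
              exact mul_le_mul_of_nonneg_left (pow_le_one₀ (norm_nonneg z) hle1) (bR_nonneg hb i)
          _ = s := by simp only [mul_one]; exact bR_sum b
      calc ‖z‖ = (‖z‖ ^ m) ^ ((m : ℝ)⁻¹) := by
            rw [← Real.rpow_natCast ‖z‖ m, ← Real.rpow_mul (norm_nonneg z),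
              mul_inv_cancel₀ (by exact_mod_cast hm.ne' : (m : ℝ) ≠ 0), Real.rpow_one]
        _ ≤ c := Real.rpow_le_rpow (by positivity) hzm (by positivity)
    have : specRad (compMat b) ≤ ENNReal.ofReal c := by
      refine iSup₂_le fun z hz => ?_
      have := ENNReal.ofReal_le_ofReal (hbound z hz)
      rwa [ofReal_norm] at this
    exact lt_of_le_of_lt this (ENNReal.ofReal_lt_one.mpr hc1)


lemma acoef_eq (m : ℕ) (μ : Fin m → ℂ) (n : ℕ) {j : ℕ} (hjm : j ≤ m) :
    acoef m μ n j = (-1 : ℂ) ^ j *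
      ∑ t ∈ Finset.powersetCard j (Finset.univ : Finset (Fin m)), ∏ l ∈ t, μ l ^ n := by
  classical
  set g : Fin m → ℂ := fun l => μ l ^ n with hg
  have hcard : Multiset.card ((Finset.univ : Finset (Fin m)).val.map g) = m := by simp
  have h := Multiset.prod_X_sub_C_coeff ((Finset.univ : Finset (Fin m)).val.map g)
    (k := m - j) (by rw [hcard]; omega)
  rw [hcard, Nat.sub_sub_self hjm, Finset.esymm_map_val] at h
  rw [acoef]
  have e : ∏ l : Fin m, (Polynomial.X - Polynomial.C (μ l ^ n))
      = (((Finset.univ : Finset (Fin m)).val.map g).map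
          (fun t => Polynomial.X - Polynomial.C t)).prod := by
    rw [Multiset.map_map]
    rfl
  rw [e, h]



lemma absCompanion_mul_rateDiag (m : ℕ) (μ : Fin m → ℂ) (n : ℕ) (r : ℝ) :
    absCompanion m μ n * rateDiag m n r =
      compMat (fun i => ‖acoef m μ n ((i : ℕ) + 1)‖ * (2 : ℝ) ^ (-((n : ℝ) * r))) := by
  ext i j
  rw [rateDiag, Matrix.mul_diagonal]
  simp only [absCompanion, compMat, Matrix.of_apply]
  rcases eq_or_ne (j : ℕ) 0 with h0 | h0
  · have : (j : ℕ) ≠ (i : ℕ) + 1 := by omega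
    simp [h0, this]
  · simp only [h0, if_false, zero_add]
    split <;> simp

lemma sInf_formula (m : ℕ) (μ : Fin m → ℂ) (hm : 0 < m) {n : ℕ} (hn : 1 ≤ n)
    (hS : 0 < ∑ i : Fin m, ‖acoef m μ n ((i : ℕ) + 1)‖) :
    sInf {r : ℝ | specRad (absCompanion m μ n * rateDiag m n r) < 1}
      = Real.logb 2 (∑ i : Fin m, ‖acoef m μ n ((i : ℕ) + 1)‖) / n := by
  set S : ℝ := ∑ i : Fin m, ‖acoef m μ n ((i : ℕ) + 1)‖ with hSdef
  have hset : {r : ℝ | specRad (absCompanion m μ n * rateDiag m n r) < 1}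
      = Set.Ioi (Real.logb 2 S / n) := by
    ext r
    rw [Set.mem_setOf_eq, absCompanion_mul_rateDiag,
      specRad_compMat_lt_one_iff hm _ (fun i => mul_nonneg (norm_nonneg _)
        (Real.rpow_nonneg (by norm_num) _))]
    rw [← Finset.sum_mul, ← hSdef]
    have ht : (0 : ℝ) < (2 : ℝ) ^ (-((n : ℝ) * r)) := Real.rpow_pos_of_pos (by norm_num) _
    rw [show (S * (2 : ℝ) ^ (-((n : ℝ) * r)) < 1)
        ↔ Real.logb 2 (S * (2 : ℝ) ^ (-((n : ℝ) * r))) < 0 from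
      (Real.logb_neg_iff (by norm_num) (by positivity)).symm]
    rw [Real.logb_mul (ne_of_gt hS) (ne_of_gt ht),
      Real.logb_rpow (by norm_num) (by norm_num)]
    rw [Set.mem_Ioi, div_lt_iff₀ (by exact_mod_cast hn : (0:ℝ) < n)]
    constructor <;> intro h <;> nlinarith
  rw [hset, csInf_Ioi]

/-- With `R^f_n = inf{r : λ(F̄_n D(r)) < 1}`, one has
`R^f_n → Σ_{i:|μ_i|>1} log₂ |μ_i|` as `n → ∞`. -/
theorem feedback_rate_threshold_tendsto (m : ℕ) (μ : Fin m → ℂ)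
    (hμ0 : ∀ i, μ i ≠ 0) (hμ1 : ∀ i, ‖μ i‖ ≠ 1)
    (hex : ∃ i, 1 < ‖μ i‖) :
    Filter.Tendsto
      (fun n : ℕ =>
        sInf {r : ℝ | specRad (absCompanion m μ n * rateDiag m n r) < 1})
      Filter.atTop
      (nhds (∑ i ∈ Finset.univ.filter fun i => 1 < ‖μ i‖,
        Real.logb 2 (‖μ i‖))) := by
  classical
  obtain ⟨i₀, hi₀⟩ := hex
  have hm : 0 < m := i₀.pos
  set K : Fin m → NNReal := fun l => ‖μ l‖₊ with hKdef
  have hKabs : ∀ l, ((K l : ℝ)) = ‖μ l‖ := fun l => rfl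
  have hK0 : ∀ l, 0 < K l := fun l => by
    simp only [hKdef, nnnorm_pos]; exact hμ0 l
  set B : Finset (Fin m) := Finset.univ.filter (fun i => 1 < ‖μ i‖) with hB
  have hBmem : ∀ l, l ∈ B ↔ 1 < K l := by
    intro l
    rw [hB, Finset.mem_filter]
    constructor
    · rintro ⟨-, h⟩; rw [← NNReal.coe_lt_coe, hKabs]; exact h
    · intro h
      refine ⟨Finset.mem_univ _, ?_⟩
      rw [← hKabs l]
      exact_mod_cast h
  set k : ℕ := B.card with hk
  set P : NNReal := ∏ l ∈ B, K l with hP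
  have hBne : B.Nonempty := ⟨i₀, by rw [hB, Finset.mem_filter]; exact ⟨Finset.mem_univ _, hi₀⟩⟩
  have hk1 : 1 ≤ k := Finset.card_pos.mpr hBne
  have hkm : k ≤ m := by
    calc k ≤ (Finset.univ : Finset (Fin m)).card := Finset.card_le_card (Finset.subset_univ B)
    _ = m := by simp
  have hi₀B : i₀ ∈ B := by rw [hB, Finset.mem_filter]; exact ⟨Finset.mem_univ _, hi₀⟩
  have hP1 : 1 < P := by
    rw [hP, ← Finset.mul_prod_erase B K hi₀B]
    have h1 : 1 < K i₀ := (hBmem i₀).mp hi₀B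
    have h2 : (1 : NNReal) ≤ ∏ l ∈ B.erase i₀, K l :=
      Finset.one_le_prod' fun l hl => ((hBmem l).mp (Finset.mem_erase.mp hl).2).le
    exact lt_of_lt_of_le h1 (le_mul_of_one_le_right' h2)
  have hP1R : (1 : ℝ) < (P : ℝ) := by exact_mod_cast hP1
  have hP0R : (0 : ℝ) < (P : ℝ) := by linarith
  -- subset product bounds
  have hsmall : ∀ t : Finset (Fin m), ∏ l ∈ t \ B, K l ≤ 1 := by
    intro t
    refine Finset.prod_le_one' fun l hl => ?_
    have := (Finset.mem_sdiff.mp hl).2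
    rw [hBmem] at this
    exact le_of_not_gt this
  have hsub : ∀ t : Finset (Fin m), ∏ l ∈ t, K l ≤ P := by
    intro t
    rw [← Finset.prod_inter_mul_prod_diff t B K]
    calc (∏ l ∈ t ∩ B, K l) * ∏ l ∈ t \ B, K l ≤ (∏ l ∈ t ∩ B, K l) * 1 :=
          mul_le_mul_right (hsmall t) _
      _ = ∏ l ∈ t ∩ B, K l := mul_one _
      _ ≤ P := Finset.prod_le_prod_of_subset_of_one_le' Finset.inter_subset_right
          (fun l hl _ => ((hBmem l).mp hl).le)
  have hstrict : ∀ t ∈ Finset.powersetCard k (Finset.univ : Finset (Fin m)), t ≠ B →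
      ((∏ l ∈ t, K l : NNReal) : ℝ) < P := by
    intro t ht hne
    have hcardt : t.card = k := (Finset.mem_powersetCard.mp ht).2
    have hss : t ∩ B ⊂ B := by
      refine Finset.ssubset_iff_subset_ne.mpr ⟨Finset.inter_subset_right, ?_⟩
      intro hEq
      have hBt : B ⊆ t := by rw [← hEq]; exact Finset.inter_subset_left
      exact hne (Finset.eq_of_subset_of_card_le hBt (by rw [hcardt])).symm
    obtain ⟨x, hxB, hxt⟩ := Finset.exists_of_ssubset hss
    have h1 : ∏ l ∈ t, K l ≤ ∏ l ∈ t ∩ B, K l := by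
      rw [← Finset.prod_inter_mul_prod_diff t B K]
      calc (∏ l ∈ t ∩ B, K l) * ∏ l ∈ t \ B, K l ≤ (∏ l ∈ t ∩ B, K l) * 1 :=
            mul_le_mul_right (hsmall t) _
        _ = _ := mul_one _
    have h2 : ∏ l ∈ t ∩ B, K l ≤ ∏ l ∈ B.erase x, K l :=
      Finset.prod_le_prod_of_subset_of_one_le'
        (fun l hl => Finset.mem_erase.mpr ⟨fun hlx => hxt (hlx ▸ hl), (Finset.mem_inter.mp hl).2⟩)
        (fun l hl _ => ((hBmem l).mp (Finset.mem_erase.mp hl).2).le)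
    have h3 : (1 : NNReal) ≤ ∏ l ∈ B.erase x, K l :=
      Finset.one_le_prod' fun l hl => ((hBmem l).mp (Finset.mem_erase.mp hl).2).le
    have h4 : P = K x * ∏ l ∈ B.erase x, K l := (Finset.mul_prod_erase B K hxB).symm
    have hx1 : (1 : ℝ) < (K x : ℝ) := by exact_mod_cast (hBmem x).mp hxB
    have hE1 : (1 : ℝ) ≤ ((∏ l ∈ B.erase x, K l : NNReal) : ℝ) := by exact_mod_cast h3
    have hle : ((∏ l ∈ t, K l : NNReal) : ℝ) ≤ ((∏ l ∈ B.erase x, K l : NNReal) : ℝ) := by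
      exact_mod_cast h1.trans h2
    have : ((P : ℝ)) = (K x : ℝ) * ((∏ l ∈ B.erase x, K l : NNReal) : ℝ) := by
      exact_mod_cast congrArg (NNReal.toReal) h4
    nlinarith
  -- bounds on coefficients
  set S : ℕ → ℝ := fun n => ∑ i : Fin m, ‖acoef m μ n ((i : ℕ) + 1)‖ with hSdef
  have habs : ∀ n : ℕ, ∀ j : ℕ, j ≤ m →
      ‖acoef m μ n j‖
        ≤ ∑ t ∈ Finset.powersetCard j (Finset.univ : Finset (Fin m)),
            ((∏ l ∈ t, K l : NNReal) : ℝ) ^ n := by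
    intro n j hjm
    rw [acoef_eq m μ n hjm]
    rw [norm_mul, norm_pow, norm_neg, norm_one, one_pow, one_mul]
    refine le_trans (norm_sum_le _ _) ?_
    refine Finset.sum_le_sum fun t _ => ?_
    rw [norm_prod]
    have : ∀ l ∈ t, ‖μ l ^ n‖ = ((K l : ℝ)) ^ n := by
      intro l _
      rw [norm_pow, hKabs]
    rw [Finset.prod_congr rfl this, Finset.prod_pow]
    refine le_of_eq ?_
    congr 1
    push_cast
    rfl
  have hupper : ∀ n : ℕ, S n ≤ ((m : ℝ) * (m : ℝ) ^ m) * (P : ℝ) ^ n := by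
    intro n
    have h1 : ∀ i : Fin m, ‖acoef m μ n ((i : ℕ) + 1)‖
        ≤ ((m : ℝ) ^ m) * (P : ℝ) ^ n := by
      intro i
      refine (habs n ((i : ℕ) + 1) i.isLt).trans ?_
      calc ∑ t ∈ Finset.powersetCard ((i : ℕ) + 1) (Finset.univ : Finset (Fin m)),
            ((∏ l ∈ t, K l : NNReal) : ℝ) ^ n
          ≤ ∑ t ∈ Finset.powersetCard ((i : ℕ) + 1) (Finset.univ : Finset (Fin m)),
            ((P : NNReal) : ℝ) ^ n := by
            refine Finset.sum_le_sum fun t _ => ?_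
            exact pow_le_pow_left₀ (by positivity) (by exact_mod_cast hsub t) n
        _ = ((Finset.powersetCard ((i : ℕ) + 1)
              (Finset.univ : Finset (Fin m))).card : ℝ) * (P : ℝ) ^ n := by
            rw [Finset.sum_const, nsmul_eq_mul]
        _ ≤ ((m : ℝ) ^ m) * (P : ℝ) ^ n := by
            refine mul_le_mul_of_nonneg_right ?_ (by positivity)
            rw [Finset.card_powersetCard, Finset.card_univ, Fintype.card_fin]
            have : m.choose ((i : ℕ) + 1) ≤ m ^ m :=
              (Nat.choose_le_pow m _).trans (Nat.pow_le_pow_right hm i.isLt)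
            exact_mod_cast this
    calc S n ≤ ∑ _i : Fin m, ((m : ℝ) ^ m) * (P : ℝ) ^ n := Finset.sum_le_sum fun i _ => h1 i
      _ = ((m : ℝ) * (m : ℝ) ^ m) * (P : ℝ) ^ n := by
          rw [Finset.sum_const, nsmul_eq_mul, Finset.card_univ, Fintype.card_fin]; ring
  have hSpos : ∀ n : ℕ, 0 < S n := by
    intro n
    refine Finset.sum_pos' (fun i _ => norm_nonneg _)
      ⟨⟨m - 1, by omega⟩, Finset.mem_univ _, ?_⟩
    show 0 < ‖acoef m μ n ((m - 1) + 1)‖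
    have he : (m - 1) + 1 = m := by omega
    rw [he]
    have hne : acoef m μ n m ≠ 0 := by
      rw [acoef, Nat.sub_self, Polynomial.coeff_zero_eq_eval_zero, Polynomial.eval_prod]
      simp only [Polynomial.eval_sub, Polynomial.eval_X, Polynomial.eval_C, zero_sub]
      rw [Finset.prod_ne_zero_iff]
      intro l _
      exact neg_ne_zero.mpr (pow_ne_zero _ (hμ0 l))
    exact norm_pos_iff.mpr hne
  have hBpc : B ∈ Finset.powersetCard k (Finset.univ : Finset (Fin m)) :=
    Finset.mem_powersetCard.mpr ⟨Finset.subset_univ _, rfl⟩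
  set T : Finset (Finset (Fin m)) :=
    (Finset.powersetCard k (Finset.univ : Finset (Fin m))).erase B with hT
  have hratio : ∀ t ∈ T, ((∏ l ∈ t, K l : NNReal) : ℝ) / (P : ℝ) < 1 := by
    intro t ht
    rw [div_lt_one hP0R]
    exact hstrict t (Finset.mem_of_mem_erase ht) (Finset.ne_of_mem_erase ht)
  have hE0 : Filter.Tendsto
      (fun n : ℕ => ∑ t ∈ T, (((∏ l ∈ t, K l : NNReal) : ℝ) / (P : ℝ)) ^ n)
      Filter.atTop (nhds 0) := by
    have := tendsto_finset_sum T (fun t ht =>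
      tendsto_pow_atTop_nhds_zero_of_lt_one (by positivity) (hratio t ht))
    simpa using this
  have hEev : ∀ᶠ n : ℕ in Filter.atTop,
      ∑ t ∈ T, (((∏ l ∈ t, K l : NNReal) : ℝ) / (P : ℝ)) ^ n ≤ 1 / 2 :=
    hE0.eventually_le_const (by norm_num)
  have hlow : ∀ n : ℕ,
      (∑ t ∈ T, (((∏ l ∈ t, K l : NNReal) : ℝ) / (P : ℝ)) ^ n ≤ 1 / 2) →
      (P : ℝ) ^ n / 2 ≤ S n := by
    intro n hEn
    have hterm : (P : ℝ) ^ n / 2 ≤ ‖acoef m μ n k‖ := by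
      rw [acoef_eq m μ n hkm]
      rw [norm_mul, norm_pow, norm_neg, norm_one, one_pow, one_mul]
      rw [← Finset.add_sum_erase _ _ hBpc, ← hT]
      have hBabs : ‖∏ l ∈ B, μ l ^ n‖ = (P : ℝ) ^ n := by
        rw [norm_prod]
        have : ∀ l ∈ B, ‖μ l ^ n‖ = ((K l : ℝ)) ^ n := by
          intro l _; rw [norm_pow, hKabs]
        rw [Finset.prod_congr rfl this, Finset.prod_pow, hP, NNReal.coe_prod]
      have htail : ‖∑ t ∈ T, ∏ l ∈ t, μ l ^ n‖ ≤ (P : ℝ) ^ n / 2 := by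
        refine le_trans (norm_sum_le _ _) ?_
        have h1 : ∀ t ∈ T, ‖∏ l ∈ t, μ l ^ n‖
            = (((∏ l ∈ t, K l : NNReal) : ℝ) / (P : ℝ)) ^ n * (P : ℝ) ^ n := by
          intro t _
          rw [norm_prod]
          have : ∀ l ∈ t, ‖μ l ^ n‖ = ((K l : ℝ)) ^ n := by
            intro l _; rw [norm_pow, hKabs]
          rw [Finset.prod_congr rfl this, Finset.prod_pow, div_pow,
            div_mul_cancel₀ _ (by positivity : (P : ℝ) ^ n ≠ 0), NNReal.coe_prod]
        rw [Finset.sum_congr rfl h1, ← Finset.sum_mul]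
        calc (∑ t ∈ T, (((∏ l ∈ t, K l : NNReal) : ℝ) / (P : ℝ)) ^ n) * (P : ℝ) ^ n
            ≤ (1 / 2) * (P : ℝ) ^ n := mul_le_mul_of_nonneg_right hEn (by positivity)
          _ = (P : ℝ) ^ n / 2 := by ring
      have habs2 : ‖∏ l ∈ B, μ l ^ n‖
          - ‖∑ t ∈ T, ∏ l ∈ t, μ l ^ n‖
          ≤ ‖∏ l ∈ B, μ l ^ n + ∑ t ∈ T, ∏ l ∈ t, μ l ^ n‖ := by
        have := norm_sub_norm_le (∏ l ∈ B, μ l ^ n) (-(∑ t ∈ T, ∏ l ∈ t, μ l ^ n))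
        simpa [sub_neg_eq_add] using this
      rw [hBabs] at habs2
      linarith
    have hsingle : ‖acoef m μ n k‖ ≤ S n := by
      have hmem : (⟨k - 1, by omega⟩ : Fin m) ∈ (Finset.univ : Finset (Fin m)) :=
        Finset.mem_univ _
      have := Finset.single_le_sum
        (f := fun i : Fin m => ‖acoef m μ n ((i : ℕ) + 1)‖)
        (fun i _ => norm_nonneg _) hmem
      simp only [Fin.val_mk] at this
      have he : (k - 1) + 1 = k := by omega
      rw [he] at this
      exact this
    linarith
  have hLP : (∑ i ∈ B, Real.logb 2 (‖μ i‖)) = Real.logb 2 (P : ℝ) := by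
    have hPeq : ((P : ℝ)) = ∏ i ∈ B, ‖μ i‖ := by
      rw [hP]
      push_cast
      exact Finset.prod_congr rfl fun l _ => hKabs l
    rw [hPeq, Real.logb_prod B _ (fun i _ => ne_of_gt (norm_pos_iff.mpr (hμ0 i)))]
  rw [hLP]
  set L : ℝ := Real.logb 2 (P : ℝ) with hL
  set C : ℝ := (m : ℝ) * (m : ℝ) ^ m with hC
  have hC0 : 0 < C := by positivity
  have hEq : (fun n : ℕ => Real.logb 2 (S n) / n) =ᶠ[Filter.atTop]
      (fun n : ℕ => sInf {r : ℝ | specRad (absCompanion m μ n * rateDiag m n r) < 1}) := by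
    filter_upwards [Filter.eventually_ge_atTop 1] with n hn
    exact (sInf_formula m μ hm hn (hSpos n)).symm
  refine Filter.Tendsto.congr' hEq ?_
  have hlo : Filter.Tendsto (fun n : ℕ => L - 1 / (n : ℝ)) Filter.atTop (nhds L) := by
    have := (tendsto_const_nhds :
      Filter.Tendsto (fun _ : ℕ => L) Filter.atTop (nhds L)).sub
      tendsto_one_div_atTop_nhds_zero_nat
    simpa using this
  have hhi : Filter.Tendsto (fun n : ℕ => L + Real.logb 2 C / (n : ℝ))
      Filter.atTop (nhds L) := by
    have := (tendsto_const_nhds :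
      Filter.Tendsto (fun _ : ℕ => L) Filter.atTop (nhds L)).add
      (tendsto_const_div_atTop_nhds_zero_nat (Real.logb 2 C))
    simpa using this
  refine tendsto_of_tendsto_of_tendsto_of_le_of_le' hlo hhi ?_ ?_
  · filter_upwards [hEev, Filter.eventually_ge_atTop 1] with n hEn hn
    have h1 : (P : ℝ) ^ n / 2 ≤ S n := hlow n hEn
    have hn0 : (0 : ℝ) < n := by exact_mod_cast hn
    have h2 : Real.logb 2 ((P : ℝ) ^ n / 2) ≤ Real.logb 2 (S n) :=
      Real.logb_le_logb_of_le (by norm_num) (by positivity) h1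
    have h3 : Real.logb 2 ((P : ℝ) ^ n / 2) = n * L - 1 := by
      rw [Real.logb_div (by positivity) (by norm_num), Real.logb_pow,
        Real.logb_self_eq_one (by norm_num)]
    have he : L - 1 / (n : ℝ) = ((n : ℝ) * L - 1) / n := by
      field_simp
    rw [he]
    rw [div_le_div_iff₀ hn0 hn0]
    nlinarith
  · filter_upwards [Filter.eventually_ge_atTop 1] with n hn
    have hn0 : (0 : ℝ) < n := by exact_mod_cast hn
    have h2 : Real.logb 2 (S n) ≤ Real.logb 2 (C * (P : ℝ) ^ n) :=
      Real.logb_le_logb_of_le (by norm_num) (hSpos n) (hupper n)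
    have h3 : Real.logb 2 (C * (P : ℝ) ^ n) = Real.logb 2 C + n * L := by
      rw [Real.logb_mul (ne_of_gt hC0) (by positivity), Real.logb_pow]
    have he : L + Real.logb 2 C / (n : ℝ) = (Real.logb 2 C + (n : ℝ) * L) / n := by
      field_simp
      ring
    rw [he]
    rw [div_le_div_iff₀ hn0 hn0]
    nlinarith
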